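/- Lemma 2 (sum of ratios with the denominator being a decayed sum of past numerators): Let 0 < β₂ < 1, ε > 0, and let (a_t)_{t∈ℕ⁺} be a nonnegative real sequence. Define b_t = Σ_{j=1}^t β₂^{t−j} a_j for all t ∈ ℕ⁺. Then for every T ∈ ℕ⁺, Σ_{j=1}^T a_j/(ε + b_j) ≤ ln(1 + b_T/ε) − T·ln(β₂). -/

import Mathlib

open Finset

/-- key pointwise inequality: a/(ε+b) ≤ log(ε+b) - log d when d ≤ ε+b-a. -/
lemma key_ratio_log (ε b a d : ℝ) (hd : 0 < d) (hda : d ≤ ε + b - a)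
    (ha : 0 ≤ a) (hεb : 0 < ε + b) :
    a / (ε + b) ≤ Real.log (ε + b) - Real.log d := by
  have h1 : Real.log (d / (ε + b)) ≤ d / (ε + b) - 1 :=
    Real.log_le_sub_one_of_pos (by positivity)
  have h2 : Real.log (d / (ε + b)) = Real.log d - Real.log (ε + b) :=
    Real.log_div hd.ne' hεb.ne'
  have h3 : d / (ε + b) - 1 ≤ -(a / (ε + b)) := by
    rw [div_sub' hεb.ne', neg_div']
    exact (div_le_div_iff_of_pos_right hεb).mpr (by linarith)
  linarith

/-- Lemma 2: sum of ratios with the denominator being a decayed sum of past numerators. -/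
theorem sum_ratios_decayed_denominator
    (β₂ ε : ℝ) (hβ₂0 : 0 < β₂) (hβ₂1 : β₂ < 1) (hε : 0 < ε)
    (a : ℕ → ℝ) (ha : ∀ t, 1 ≤ t → 0 ≤ a t)
    (b : ℕ → ℝ) (hb : ∀ t, 1 ≤ t → b t = ∑ j ∈ Finset.Icc 1 t, β₂ ^ (t - j) * a j)
    (T : ℕ) (hT : 1 ≤ T) :
    ∑ j ∈ Finset.Icc 1 T, a j / (ε + b j)
      ≤ Real.log (1 + b T / ε) - T * Real.log β₂ := by
  have hbnn : ∀ t, 1 ≤ t → 0 ≤ b t := by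
    intro t ht
    rw [hb t ht]
    apply Finset.sum_nonneg
    intro j hj
    simp only [Finset.mem_Icc] at hj
    exact mul_nonneg (pow_nonneg hβ₂0.le _) (ha j hj.1)
  have hrec : ∀ n, 1 ≤ n → b (n + 1) = β₂ * b n + a (n + 1) := by
    intro n hn
    rw [hb (n + 1) (by omega), hb n hn,
      Finset.sum_Icc_succ_top (by omega : 1 ≤ n + 1), Finset.mul_sum]
    congr 1
    · apply Finset.sum_congr rfl
      intro j hj
      simp only [Finset.mem_Icc] at hj
      have hnj : n + 1 - j = (n - j) + 1 := by omega
      rw [hnj, pow_succ]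
      ring
    · simp
  have hb1 : b 1 = a 1 := by
    rw [hb 1 le_rfl]; simp
  have hlogβ : Real.log β₂ ≤ 0 := Real.log_nonpos hβ₂0.le hβ₂1.le
  have main : ∀ T, 1 ≤ T →
      ∑ j ∈ Finset.Icc 1 T, a j / (ε + b j)
        ≤ Real.log (ε + b T) - Real.log ε - T * Real.log β₂ := by
    intro T hT
    induction T, hT using Nat.le_induction with
    | base =>
      simp only [Finset.Icc_self, Finset.sum_singleton, Nat.cast_one, one_mul]
      have hkey := key_ratio_log ε (b 1) (a 1) ε hε (by rw [hb1]; linarith)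
        (ha 1 le_rfl) (by linarith [hbnn 1 le_rfl])
      linarith
    | succ n hn ih =>
      rw [Finset.sum_Icc_succ_top (by omega : 1 ≤ n + 1)]
      have hbn := hbnn n hn
      have hbn1 := hbnn (n + 1) (by omega)
      have hkey := key_ratio_log ε (b (n + 1)) (a (n + 1)) (β₂ * (ε + b n))
        (by positivity)
        (by rw [hrec n hn]; nlinarith)
        (ha (n + 1) (by omega)) (by linarith)
      have hlogmul : Real.log (β₂ * (ε + b n)) = Real.log β₂ + Real.log (ε + b n) :=
        Real.log_mul hβ₂0.ne' (by positivity)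
      push_cast
      rw [hlogmul] at hkey
      linarith
  have hfin := main T hT
  have hbT := hbnn T hT
  have h1 : 1 + b T / ε = (ε + b T) / ε := by field_simp
  rw [h1, Real.log_div (by positivity) hε.ne']
  linarith
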